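/- Dimension formula for orbit closures: the orbit closure corresponding to a quiver rank array r in the representation space of a bipartite type A quiver has dimension d_x d_y − Σ_{i=2}^{2n+1} Σ_{j=1}^{2n} (b_{i-1,n+1} − b_{i-1,j}) (b_{i,j} + b_{i-1,j-1} − b_{i,j-1} − b_{i-1,j}), where b = b(r) is the block rank matrix; equivalently, the length of the Zelevinsky permutation v(r) is given by the displayed double sum, and dim O̅_r = l(w) − l(v(r)) with l(w) = d_x d_y. -/
import Mathlib


/-- Cumulative block sizes: block `k` (0-indexed) occupies indices
`cum f k ≤ r < cum f (k+1)`. -/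
def cum (f : ℕ → ℕ) (k : ℕ) : ℕ := ∑ i ∈ Finset.range k, f i

lemma cum_mono (f : ℕ → ℕ) : Monotone (cum f) := by
  intro i j hij
  exact Finset.sum_le_sum_of_subset (Finset.range_subset_range.2 hij)

/-- Block index (1-indexed): least `i ≥ 1` with `x < cum f i`. -/
noncomputable def blk (f : ℕ → ℕ) (x : ℕ) : ℕ := sInf {k | x < cum f (k + 1)} + 1

lemma blk_spec (f : ℕ → ℕ) (L x : ℕ) (hL : 1 ≤ L) (hx : x < cum f L) :
    1 ≤ blk f x ∧ blk f x ≤ L ∧ cum f (blk f x - 1) ≤ x ∧ x < cum f (blk f x) := by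
  have hne : (L - 1) ∈ {k | x < cum f (k + 1)} := by
    simp only [Set.mem_setOf_eq]
    have : L - 1 + 1 = L := by omega
    rw [this]; exact hx
  have hmem := Nat.sInf_mem ⟨_, hne⟩
  have hle : sInf {k | x < cum f (k + 1)} ≤ L - 1 := Nat.sInf_le hne
  refine ⟨by simp [blk], by simp [blk]; omega, ?_, ?_⟩
  · rcases Nat.eq_zero_or_pos (sInf {k | x < cum f (k + 1)}) with h0 | h0
    · have e : blk f x - 1 = 0 := by simp [blk, h0]
      simp [e, cum]
    · have hlt : sInf {k | x < cum f (k + 1)} - 1 < sInf {k | x < cum f (k + 1)} := by omega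
      have := Nat.notMem_of_lt_sInf hlt
      simp only [Set.mem_setOf_eq, not_lt] at this
      have heq : sInf {k | x < cum f (k + 1)} - 1 + 1 = blk f x - 1 := by simp [blk]; omega
      rwa [heq] at this
  · simpa [blk] using hmem

lemma blk_eq (f : ℕ → ℕ) (L x i : ℕ) (hL : 1 ≤ L) (hx : x < cum f L)
    (h1 : 1 ≤ i) (h2 : cum f (i - 1) ≤ x) (h3 : x < cum f i) : blk f x = i := by
  obtain ⟨a1, a2, a3, a4⟩ := blk_spec f L x hL hx
  by_contra hne
  rcases Nat.lt_or_ge (blk f x) i with hlt | hge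
  · -- x < cum f (blk f x) ≤ cum f (i-1) ≤ x
    have := cum_mono f (show blk f x ≤ i - 1 by omega)
    omega
  · have hgt : i < blk f x := by omega
    have := cum_mono f (show i ≤ blk f x - 1 by omega)
    omega

lemma blk_mono (f : ℕ → ℕ) (L x y : ℕ) (hL : 1 ≤ L) (hx : x < cum f L) (hy : y < cum f L)
    (hxy : x ≤ y) : blk f x ≤ blk f y := by
  obtain ⟨a1, a2, a3, a4⟩ := blk_spec f L x hL hx
  obtain ⟨b1, b2, b3, b4⟩ := blk_spec f L y hL hy
  by_contra hc
  have := cum_mono f (show blk f y ≤ blk f x - 1 by omega)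
  omega

lemma telescope (g : ℕ → ℤ) (a m : ℕ) :
    ∑ q ∈ Finset.Icc (a + 1) (a + m), (g q - g (q - 1)) = g (a + m) - g a := by
  induction m with
  | zero => simp
  | succ m ih =>
      rw [show a + (m + 1) = (a + m) + 1 from rfl,
        Finset.sum_Icc_succ_top (by omega), ih]
      have : a + m + 1 - 1 = a + m := by omega
      rw [this]; ring

lemma sum_key {α κ : Type*} [Fintype α] [DecidableEq α] [DecidableEq κ] (key : α → κ) (t : Finset κ)
    (ht : ∀ r, key r ∈ t) (F : κ → ℤ) :
    ∑ r, F (key r) = ∑ a ∈ t, ((Finset.univ.filter (fun r => key r = a)).card : ℤ) * F a := by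
  rw [← Finset.sum_fiberwise_of_maps_to (fun r _ => ht r) (fun r => F (key r))]
  refine Finset.sum_congr rfl fun a _ => ?_
  rw [Finset.sum_congr rfl (fun r hr => by rw [(Finset.mem_filter.1 hr).2]),
    Finset.sum_const, nsmul_eq_mul]

lemma double_count {α κ : Type*} [Fintype α] [DecidableEq α] [DecidableEq κ]
    (key : α → κ) (t : Finset κ) (ht : ∀ r, key r ∈ t)
    (Q : κ → κ → Prop) [∀ a c, Decidable (Q a c)] :
    ((Finset.univ.filter (fun pr : α × α => Q (key pr.1) (key pr.2))).card : ℤ)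
      = ∑ a ∈ t, ∑ c ∈ t,
          ((Finset.univ.filter (fun r => key r = a)).card : ℤ) *
          (((Finset.univ.filter (fun r => key r = c)).card : ℤ) * (if Q a c then 1 else 0)) := by
  have inner : ∀ a : κ, (∑ r' : α, (if Q a (key r') then (1:ℤ) else 0))
      = ∑ c ∈ t, ((Finset.univ.filter (fun r => key r = c)).card : ℤ) * (if Q a c then 1 else 0) :=
    fun a => sum_key key t ht (fun c => if Q a c then (1:ℤ) else 0)
  have outer := sum_key key t ht
      (fun a => ∑ r' : α, if Q a (key r') then (1:ℤ) else 0)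
  calc ((Finset.univ.filter (fun pr : α × α => Q (key pr.1) (key pr.2))).card : ℤ)
      = ∑ r : α, ∑ r' : α, (if Q (key r) (key r') then (1:ℤ) else 0) := by
        rw [Finset.card_filter]
        push_cast
        rw [Fintype.sum_prod_type]
    _ = ∑ a ∈ t, ((Finset.univ.filter (fun r => key r = a)).card : ℤ) *
          ∑ r' : α, (if Q a (key r') then (1:ℤ) else 0) := outer
    _ = _ := Finset.sum_congr rfl fun a _ => by rw [inner a, Finset.mul_sum]

/-- dimension formula for orbit closures, combinatorial core: the orbit
closure of a quiver rank array `r` has dimension `d_x d_y - l(v(r))` with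
`l(v(r))` given by the displayed double sum.  Combinatorial core: let
`v(r) = σ` be the Zelevinsky permutation attached to the `(2n+1) × (2n+1)` block rank
matrix `b` (so that the number of `1`s of `σ` in block `(i,j)` is the mixed second
difference `b i j + b (i-1) (j-1) - b i (j-1) - b (i-1) j`, with the `1`s arranged
NW-to-SE within each block row and each block column).  Then the length of `σ`
(its number of inversions) equals
`Σ_{i=2}^{2n+1} Σ_{j=1}^{2n} (b (i-1) (2n+1) - b (i-1) j) ⬝
  (b i j + b (i-1) (j-1) - b i (j-1) - b (i-1) j)`,
the first factor being the number of `1`s strictly northeast of block `(i,j)`. -/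
theorem stmt19 (n : ℕ) (h w : ℕ → ℕ) (d : ℕ)
    (hd : d = cum h (2 * n + 1)) (hw : d = cum w (2 * n + 1))
    (b : ℕ → ℕ → ℤ)
    (hb0r : ∀ j, b 0 j = 0) (hb0c : ∀ i, b i 0 = 0)
    (σ : Equiv.Perm (Fin d))
    (hcount : ∀ i j, 1 ≤ i → i ≤ 2 * n + 1 → 1 ≤ j → j ≤ 2 * n + 1 →
      ((Finset.univ.filter (fun r : Fin d =>
          cum h (i - 1) ≤ r.val ∧ r.val < cum h i ∧
          cum w (j - 1) ≤ (σ r).val ∧ (σ r).val < cum w j)).card : ℤ)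
        = b i j + b (i - 1) (j - 1) - b i (j - 1) - b (i - 1) j)
    (mono_row : ∀ (i : ℕ) (r r' : Fin d), i < 2 * n + 1 →
      cum h i ≤ r.val → r'.val < cum h (i + 1) → r < r' → σ r < σ r')
    (mono_col : ∀ (j : ℕ) (c c' : Fin d), j < 2 * n + 1 →
      cum w j ≤ c.val → c'.val < cum w (j + 1) → c < c' → σ.symm c < σ.symm c') :
    ((Finset.univ.filter (fun pr : Fin d × Fin d =>
        pr.1 < pr.2 ∧ σ pr.2 < σ pr.1)).card : ℤ)
      = ∑ i ∈ Finset.Icc 2 (2 * n + 1), ∑ j ∈ Finset.Icc 1 (2 * n),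
          (b (i - 1) (2 * n + 1) - b (i - 1) j) *
          (b i j + b (i - 1) (j - 1) - b i (j - 1) - b (i - 1) j) := by
  have hL : 1 ≤ 2 * n + 1 := by omega
  have hrlt : ∀ r : Fin d, r.val < cum h (2 * n + 1) := fun r => hd ▸ r.isLt
  have hclt : ∀ r : Fin d, (σ r).val < cum w (2 * n + 1) := fun r => hw ▸ (σ r).isLt
  -- the key map
  set key : Fin d → ℕ × ℕ := fun r => (blk h r.val, blk w (σ r).val) with hkeydef
  have hmem : ∀ r : Fin d, key r ∈ Finset.Icc 1 (2*n+1) ×ˢ Finset.Icc 1 (2*n+1) := by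
    intro r
    obtain ⟨a1, a2, -, -⟩ := blk_spec h (2*n+1) r.val hL (hrlt r)
    obtain ⟨c1, c2, -, -⟩ := blk_spec w (2*n+1) (σ r).val hL (hclt r)
    simp only [hkeydef, Finset.mem_product, Finset.mem_Icc]
    omega
  -- inversion condition in terms of blocks
  have hkeyiff : ∀ r r' : Fin d,
      (r < r' ∧ σ r' < σ r) ↔ ((key r).1 < (key r').1 ∧ (key r').2 < (key r).2) := by
    intro r r'
    obtain ⟨a1, a2, a3, a4⟩ := blk_spec h (2*n+1) r.val hL (hrlt r)
    obtain ⟨b1, b2, b3, b4⟩ := blk_spec h (2*n+1) r'.val hL (hrlt r')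
    obtain ⟨c1, c2, c3, c4⟩ := blk_spec w (2*n+1) (σ r).val hL (hclt r)
    obtain ⟨e1, e2, e3, e4⟩ := blk_spec w (2*n+1) (σ r').val hL (hclt r')
    simp only [hkeydef]
    constructor
    · rintro ⟨hrr, hss⟩
      have h1 : blk h r.val ≤ blk h r'.val :=
        blk_mono h (2*n+1) _ _ hL (hrlt r) (hrlt r') (le_of_lt hrr)
      have h2 : blk w (σ r').val ≤ blk w (σ r).val :=
        blk_mono w (2*n+1) _ _ hL (hclt r') (hclt r) (le_of_lt hss)
      constructor
      · rcases lt_or_eq_of_le h1 with hlt | heq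
        · exact hlt
        · exfalso
          have hthis := mono_row (blk h r.val - 1) r r' (by omega) a3
            (by rw [show blk h r.val - 1 + 1 = blk h r'.val by omega]; exact b4) hrr
          exact lt_asymm hss hthis
      · rcases lt_or_eq_of_le h2 with hlt | heq
        · exact hlt
        · exfalso
          have hthis := mono_col (blk w (σ r').val - 1) (σ r') (σ r) (by omega) e3
            (by rw [show blk w (σ r').val - 1 + 1 = blk w (σ r).val by omega]; exact c4) hss
          simp only [Equiv.symm_apply_apply] at hthis
          exact lt_asymm hrr hthis
    · rintro ⟨hb1, hb2⟩
      constructor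
      · have : r.val < r'.val :=
          lt_of_lt_of_le a4 (le_trans (cum_mono h (show blk h r.val ≤ blk h r'.val - 1 by omega)) b3)
        exact Fin.lt_def.2 this
      · have : (σ r').val < (σ r).val :=
          lt_of_lt_of_le e4 (le_trans (cum_mono w (show blk w (σ r').val ≤ blk w (σ r).val - 1 by omega)) c3)
        exact Fin.lt_def.2 this
  -- fiber cardinalities
  have hfib : ∀ i j, 1 ≤ i → i ≤ 2*n+1 → 1 ≤ j → j ≤ 2*n+1 →
      ((Finset.univ.filter (fun r : Fin d => key r = (i, j))).card : ℤ)
        = b i j + b (i-1) (j-1) - b i (j-1) - b (i-1) j := by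
    intro i j hi1 hi2 hj1 hj2
    rw [← hcount i j hi1 hi2 hj1 hj2]
    have hset : (Finset.univ.filter (fun r : Fin d => key r = (i, j)))
        = Finset.univ.filter (fun r : Fin d => cum h (i - 1) ≤ r.val ∧ r.val < cum h i ∧
            cum w (j - 1) ≤ (σ r).val ∧ (σ r).val < cum w j) := by
      apply Finset.filter_congr
      intro r _
      simp only [hkeydef, Prod.mk.injEq]
      obtain ⟨a1, a2, a3, a4⟩ := blk_spec h (2*n+1) r.val hL (hrlt r)
      obtain ⟨c1, c2, c3, c4⟩ := blk_spec w (2*n+1) (σ r).val hL (hclt r)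
      constructor
      · rintro ⟨rfl, rfl⟩
        exact ⟨a3, a4, c3, c4⟩
      · rintro ⟨d1, d2, d3, d4⟩
        exact ⟨blk_eq h (2*n+1) r.val i hL (hrlt r) hi1 d1 d2,
               blk_eq w (2*n+1) (σ r).val j hL (hclt r) hj1 d3 d4⟩
    rw [hset]
  -- step 1: rewrite the inversion set via keys
  have e1 : (Finset.univ.filter (fun pr : Fin d × Fin d => pr.1 < pr.2 ∧ σ pr.2 < σ pr.1))
      = Finset.univ.filter (fun pr : Fin d × Fin d =>
          (key pr.1).1 < (key pr.2).1 ∧ (key pr.2).2 < (key pr.1).2) :=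
    Finset.filter_congr (fun pr _ => hkeyiff pr.1 pr.2)
  rw [e1]
  rw [double_count key (Finset.Icc 1 (2*n+1) ×ˢ Finset.Icc 1 (2*n+1)) hmem
    (fun a c => a.1 < c.1 ∧ c.2 < a.2)]
  -- northeast count via telescoping
  have hNE : ∀ i j : ℕ, 1 ≤ i → j ≤ 2*n+1 →
      b (i-1) (2*n+1) - b (i-1) j
        = ∑ q ∈ Finset.Icc (j+1) (2*n+1), ∑ p ∈ Finset.Icc 1 (i-1),
            (b p q + b (p-1) (q-1) - b p (q-1) - b (p-1) q) := by
    intro i j hi hjL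
    have t1 := telescope (fun q => b (i-1) q) j (2*n+1-j)
    rw [show j + (2*n+1-j) = 2*n+1 by omega] at t1
    rw [← t1]
    refine Finset.sum_congr rfl fun q hq => ?_
    have hq1 : 1 ≤ q := by
      simp only [Finset.mem_Icc] at hq; omega
    have t2 := telescope (fun p => b p q - b p (q-1)) 0 (i-1)
    simp only [zero_add] at t2
    rw [hb0r q, hb0r (q-1)] at t2
    calc b (i-1) q - b (i-1) (q-1)
        = ∑ p ∈ Finset.Icc 1 (i-1),
            ((b p q - b p (q-1)) - (b (p-1) q - b (p-1) (q-1))) := by rw [t2]; ring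
      _ = ∑ p ∈ Finset.Icc 1 (i-1),
            (b p q + b (p-1) (q-1) - b p (q-1) - b (p-1) q) :=
          Finset.sum_congr rfl fun p _ => by ring
  -- step: evaluate the double sum over blocks
  have key1 : (∑ a ∈ Finset.Icc 1 (2*n+1) ×ˢ Finset.Icc 1 (2*n+1),
      ∑ c ∈ Finset.Icc 1 (2*n+1) ×ˢ Finset.Icc 1 (2*n+1),
        ((Finset.univ.filter (fun r => key r = a)).card : ℤ) *
          (((Finset.univ.filter (fun r => key r = c)).card : ℤ) *
            if a.1 < c.1 ∧ c.2 < a.2 then 1 else 0))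
      = ∑ i ∈ Finset.Icc 1 (2*n+1), ∑ j ∈ Finset.Icc 1 (2*n+1),
          (∑ q ∈ Finset.Icc (j+1) (2*n+1), ∑ p ∈ Finset.Icc 1 (i-1),
            (b p q + b (p-1) (q-1) - b p (q-1) - b (p-1) q)) *
          (b i j + b (i-1) (j-1) - b i (j-1) - b (i-1) j) := by
    calc (∑ a ∈ Finset.Icc 1 (2*n+1) ×ˢ Finset.Icc 1 (2*n+1),
        ∑ c ∈ Finset.Icc 1 (2*n+1) ×ˢ Finset.Icc 1 (2*n+1),
          ((Finset.univ.filter (fun r => key r = a)).card : ℤ) *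
            (((Finset.univ.filter (fun r => key r = c)).card : ℤ) *
              if a.1 < c.1 ∧ c.2 < a.2 then 1 else 0))
        = ∑ a ∈ Finset.Icc 1 (2*n+1) ×ˢ Finset.Icc 1 (2*n+1),
            ∑ c ∈ Finset.Icc 1 (2*n+1) ×ˢ Finset.Icc 1 (2*n+1),
              (b a.1 a.2 + b (a.1-1) (a.2-1) - b a.1 (a.2-1) - b (a.1-1) a.2) *
                ((b c.1 c.2 + b (c.1-1) (c.2-1) - b c.1 (c.2-1) - b (c.1-1) c.2) *
                  if a.1 < c.1 ∧ c.2 < a.2 then 1 else 0) := by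
          refine Finset.sum_congr rfl fun a ha => Finset.sum_congr rfl fun c hc => ?_
          obtain ⟨i, j⟩ := a
          obtain ⟨p, q⟩ := c
          simp only [Finset.mem_product, Finset.mem_Icc] at ha hc
          rw [hfib i j ha.1.1 ha.1.2 ha.2.1 ha.2.2, hfib p q hc.1.1 hc.1.2 hc.2.1 hc.2.2]
      _ = ∑ c ∈ Finset.Icc 1 (2*n+1) ×ˢ Finset.Icc 1 (2*n+1),
            ∑ a ∈ Finset.Icc 1 (2*n+1) ×ˢ Finset.Icc 1 (2*n+1),
              (b a.1 a.2 + b (a.1-1) (a.2-1) - b a.1 (a.2-1) - b (a.1-1) a.2) *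
                ((b c.1 c.2 + b (c.1-1) (c.2-1) - b c.1 (c.2-1) - b (c.1-1) c.2) *
                  if a.1 < c.1 ∧ c.2 < a.2 then 1 else 0) := Finset.sum_comm
      _ = ∑ i ∈ Finset.Icc 1 (2*n+1), ∑ j ∈ Finset.Icc 1 (2*n+1),
            ∑ p ∈ Finset.Icc 1 (2*n+1), ∑ q ∈ Finset.Icc 1 (2*n+1),
              (b p q + b (p-1) (q-1) - b p (q-1) - b (p-1) q) *
                ((b i j + b (i-1) (j-1) - b i (j-1) - b (i-1) j) *
                  if p < i ∧ j < q then 1 else 0) := by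
          rw [Finset.sum_product]
          refine Finset.sum_congr rfl fun i _ => ?_
          refine Finset.sum_congr rfl fun j _ => ?_
          rw [Finset.sum_product]
      _ = ∑ i ∈ Finset.Icc 1 (2*n+1), ∑ j ∈ Finset.Icc 1 (2*n+1),
            (∑ q ∈ Finset.Icc (j+1) (2*n+1), ∑ p ∈ Finset.Icc 1 (i-1),
              (b p q + b (p-1) (q-1) - b p (q-1) - b (p-1) q)) *
            (b i j + b (i-1) (j-1) - b i (j-1) - b (i-1) j) := by
          refine Finset.sum_congr rfl fun i hi => Finset.sum_congr rfl fun j hj => ?_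
          simp only [Finset.mem_Icc] at hi hj
          have f1 : (Finset.Icc 1 (2*n+1)).filter (fun p => p < i) = Finset.Icc 1 (i-1) := by
            ext p
            simp only [Finset.mem_filter, Finset.mem_Icc]
            omega
          have f2 : (Finset.Icc 1 (2*n+1)).filter (fun q => j < q) = Finset.Icc (j+1) (2*n+1) := by
            ext q
            simp only [Finset.mem_filter, Finset.mem_Icc]
            omega
          calc ∑ p ∈ Finset.Icc 1 (2*n+1), ∑ q ∈ Finset.Icc 1 (2*n+1),
                (b p q + b (p-1) (q-1) - b p (q-1) - b (p-1) q) *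
                  ((b i j + b (i-1) (j-1) - b i (j-1) - b (i-1) j) *
                    if p < i ∧ j < q then 1 else 0)
              = ∑ p ∈ Finset.Icc 1 (2*n+1),
                  if p < i then (∑ q ∈ Finset.Icc 1 (2*n+1),
                    if j < q then (b p q + b (p-1) (q-1) - b p (q-1) - b (p-1) q) *
                      (b i j + b (i-1) (j-1) - b i (j-1) - b (i-1) j) else 0) else 0 := by
                refine Finset.sum_congr rfl fun p _ => ?_
                by_cases hp : p < i
                · simp only [hp, if_true]
                  refine Finset.sum_congr rfl fun q _ => ?_
                  by_cases hq : j < q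
                  · simp only [hp, hq, and_self, if_true]
                    ring
                  · simp [hp, hq]
                · simp [hp]
            _ = ∑ p ∈ (Finset.Icc 1 (2*n+1)).filter (fun p => p < i),
                  ∑ q ∈ Finset.Icc 1 (2*n+1),
                    if j < q then (b p q + b (p-1) (q-1) - b p (q-1) - b (p-1) q) *
                      (b i j + b (i-1) (j-1) - b i (j-1) - b (i-1) j) else 0 :=
                (Finset.sum_filter _ _).symm
            _ = ∑ p ∈ Finset.Icc 1 (i-1), ∑ q ∈ Finset.Icc (j+1) (2*n+1),
                  (b p q + b (p-1) (q-1) - b p (q-1) - b (p-1) q) *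
                    (b i j + b (i-1) (j-1) - b i (j-1) - b (i-1) j) := by
                rw [f1]
                exact Finset.sum_congr rfl fun p _ => by rw [← f2, Finset.sum_filter]
            _ = (∑ q ∈ Finset.Icc (j+1) (2*n+1), ∑ p ∈ Finset.Icc 1 (i-1),
                  (b p q + b (p-1) (q-1) - b p (q-1) - b (p-1) q)) *
                (b i j + b (i-1) (j-1) - b i (j-1) - b (i-1) j) := by
                rw [Finset.sum_mul, Finset.sum_comm]
                exact Finset.sum_congr rfl fun p _ => by rw [Finset.sum_mul]
  -- step: rewrite the target sum into the same canonical form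
  have key2 : (∑ i ∈ Finset.Icc 2 (2*n+1), ∑ j ∈ Finset.Icc 1 (2*n),
        (b (i-1) (2*n+1) - b (i-1) j) *
          (b i j + b (i-1) (j-1) - b i (j-1) - b (i-1) j))
      = ∑ i ∈ Finset.Icc 1 (2*n+1), ∑ j ∈ Finset.Icc 1 (2*n+1),
          (∑ q ∈ Finset.Icc (j+1) (2*n+1), ∑ p ∈ Finset.Icc 1 (i-1),
            (b p q + b (p-1) (q-1) - b p (q-1) - b (p-1) q)) *
          (b i j + b (i-1) (j-1) - b i (j-1) - b (i-1) j) := by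
    have hsub1 : Finset.Icc 2 (2*n+1) ⊆ Finset.Icc 1 (2*n+1) :=
      Finset.Icc_subset_Icc (by omega) le_rfl
    have hsub2 : Finset.Icc 1 (2*n) ⊆ Finset.Icc 1 (2*n+1) :=
      Finset.Icc_subset_Icc le_rfl (by omega)
    calc (∑ i ∈ Finset.Icc 2 (2*n+1), ∑ j ∈ Finset.Icc 1 (2*n),
          (b (i-1) (2*n+1) - b (i-1) j) *
            (b i j + b (i-1) (j-1) - b i (j-1) - b (i-1) j))
        = ∑ i ∈ Finset.Icc 2 (2*n+1), ∑ j ∈ Finset.Icc 1 (2*n),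
            (∑ q ∈ Finset.Icc (j+1) (2*n+1), ∑ p ∈ Finset.Icc 1 (i-1),
              (b p q + b (p-1) (q-1) - b p (q-1) - b (p-1) q)) *
            (b i j + b (i-1) (j-1) - b i (j-1) - b (i-1) j) := by
          refine Finset.sum_congr rfl fun i hi => Finset.sum_congr rfl fun j hj => ?_
          simp only [Finset.mem_Icc] at hi hj
          rw [hNE i j (by omega) (by omega)]
      _ = ∑ i ∈ Finset.Icc 2 (2*n+1), ∑ j ∈ Finset.Icc 1 (2*n+1),
            (∑ q ∈ Finset.Icc (j+1) (2*n+1), ∑ p ∈ Finset.Icc 1 (i-1),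
              (b p q + b (p-1) (q-1) - b p (q-1) - b (p-1) q)) *
            (b i j + b (i-1) (j-1) - b i (j-1) - b (i-1) j) := by
          refine Finset.sum_congr rfl fun i _ => ?_
          refine Finset.sum_subset hsub2 fun j hj hj' => ?_
          simp only [Finset.mem_Icc] at hj hj'
          have : j + 1 > 2*n+1 := by omega
          rw [Finset.Icc_eq_empty (by omega)]
          simp
      _ = ∑ i ∈ Finset.Icc 1 (2*n+1), ∑ j ∈ Finset.Icc 1 (2*n+1),
            (∑ q ∈ Finset.Icc (j+1) (2*n+1), ∑ p ∈ Finset.Icc 1 (i-1),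
              (b p q + b (p-1) (q-1) - b p (q-1) - b (p-1) q)) *
            (b i j + b (i-1) (j-1) - b i (j-1) - b (i-1) j) := by
          refine Finset.sum_subset hsub1 fun i hi hi' => ?_
          simp only [Finset.mem_Icc] at hi hi'
          have hi1 : i = 1 := by omega
          subst hi1
          refine Finset.sum_eq_zero fun j _ => ?_
          rw [show Finset.Icc 1 (1-1) = (∅ : Finset ℕ) from Finset.Icc_eq_empty (by omega)]
          simp
  rw [key2]
  exact key1
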